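/- Let G be a finite simple graph, r < s positive integers, k ≤ k' positive integers, 𝒮 a k-(r,s)-nucleus of G and 𝒮' a k'-(r,s)-nucleus of G. If 𝒮 and 𝒮' contain a common s-clique (i.e., 𝒮 ∩ 𝒮' ≠ ∅ as sets of s-cliques), then 𝒮' ⊆ 𝒮. Consequently, the family of all (r,s)-nuclei of G (over all values of k) forms a laminar family: any two nuclei are either disjoint or one contains the other. -/

import Mathlib

variable {V : Type*} [Fintype V] [DecidableEq V]

/-- `𝒮` is a set of `s`-cliques of the graph `G`. -/
def CliqueSet (G : SimpleGraph V) (s : ℕ) (𝒮 : Finset (Finset V)) : Prop :=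
  ∀ S ∈ 𝒮, G.IsNClique s S

/-- `R ∈ K_r(𝒮)`: `R` is an `r`-clique of `G` contained in some member of `𝒮`. -/
def InKr (G : SimpleGraph V) (r : ℕ) (𝒮 : Finset (Finset V)) (R : Finset V) : Prop :=
  G.IsNClique r R ∧ ∃ S ∈ 𝒮, R ⊆ S

/-- The `𝒮`-degree of `R`: the number of members of `𝒮` containing `R`. -/
def SDeg (𝒮 : Finset (Finset V)) (R : Finset V) : ℕ :=
  (𝒮.filter fun S => R ⊆ S).card

/-- One step of `𝒮`-connectivity: both `R` and `R'` are in `K_r(𝒮)` and some member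
of `𝒮` contains `R ∪ R'`. -/
def Step (G : SimpleGraph V) (r : ℕ) (𝒮 : Finset (Finset V)) (R R' : Finset V) : Prop :=
  InKr G r 𝒮 R ∧ InKr G r 𝒮 R' ∧ ∃ S ∈ 𝒮, R ∪ R' ⊆ S

/-- `R` and `R'` are `𝒮`-connected: there is a sequence of members of `K_r(𝒮)` from `R`
to `R'` in which each consecutive pair is contained in a common member of `𝒮`. -/
def SConnected (G : SimpleGraph V) (r : ℕ) (𝒮 : Finset (Finset V)) (R R' : Finset V) : Prop :=
  Relation.ReflTransGen (Step G r 𝒮) R R'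

/-- The degree condition at level `k`: every `R ∈ K_r(𝒮)` has `𝒮`-degree at least `k`. -/
def DegCond (G : SimpleGraph V) (r k : ℕ) (𝒮 : Finset (Finset V)) : Prop :=
  ∀ R, InKr G r 𝒮 R → k ≤ SDeg 𝒮 R

/-- The connectivity condition: every two members of `K_r(𝒮)` are `𝒮`-connected. -/
def ConnCond (G : SimpleGraph V) (r : ℕ) (𝒮 : Finset (Finset V)) : Prop :=
  ∀ R R', InKr G r 𝒮 R → InKr G r 𝒮 R' → SConnected G r 𝒮 R R'

/-- `𝒮` satisfies all the (non-maximality) conditions of a `k`-`(r,s)`-nucleus. -/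
def NucleusPre (G : SimpleGraph V) (r s k : ℕ) (𝒮 : Finset (Finset V)) : Prop :=
  CliqueSet G s 𝒮 ∧ DegCond G r k 𝒮 ∧ ConnCond G r 𝒮

/-- `𝒮` is a `k`-`(r,s)`-nucleus of `G`: a set of `s`-cliques, maximal under inclusion,
satisfying the degree condition at level `k` and the connectivity condition. -/
def IsNucleus (G : SimpleGraph V) (r s k : ℕ) (𝒮 : Finset (Finset V)) : Prop :=
  NucleusPre G r s k 𝒮 ∧ ∀ 𝒯, NucleusPre G r s k 𝒯 → 𝒮 ⊆ 𝒯 → 𝒯 = 𝒮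


lemma sdeg_mono {𝒮 𝒯 : Finset (Finset V)} (h : 𝒮 ⊆ 𝒯) (R : Finset V) :
    SDeg 𝒮 R ≤ SDeg 𝒯 R :=
  Finset.card_le_card (Finset.filter_subset_filter _ h)

lemma inKr_mono {G : SimpleGraph V} {r : ℕ} {𝒮 𝒯 : Finset (Finset V)} (h : 𝒮 ⊆ 𝒯)
    {R : Finset V} (hR : InKr G r 𝒮 R) : InKr G r 𝒯 R :=
  ⟨hR.1, hR.2.imp fun S hS => ⟨h hS.1, hS.2⟩⟩

lemma step_mono {G : SimpleGraph V} {r : ℕ} {𝒮 𝒯 : Finset (Finset V)} (h : 𝒮 ⊆ 𝒯)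
    {R R' : Finset V} (hR : Step G r 𝒮 R R') : Step G r 𝒯 R R' :=
  ⟨inKr_mono h hR.1, inKr_mono h hR.2.1, hR.2.2.imp fun S hS => ⟨h hS.1, hS.2⟩⟩

lemma step_symm {G : SimpleGraph V} {r : ℕ} {𝒮 : Finset (Finset V)} :
    Symmetric (Step G r 𝒮) := by
  intro R R' ⟨h1, h2, S, hS, hsub⟩
  exact ⟨h2, h1, S, hS, by rwa [Finset.union_comm]⟩

lemma sconnected_mono {G : SimpleGraph V} {r : ℕ} {𝒮 𝒯 : Finset (Finset V)} (h : 𝒮 ⊆ 𝒯)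
    {R R' : Finset V} (hR : SConnected G r 𝒮 R R') : SConnected G r 𝒯 R R' :=
  Relation.ReflTransGen.mono (fun _ _ => step_mono h) R R' hR

lemma nuclei_nested (G : SimpleGraph V) (r s k k' : ℕ)
    (hrs : r < s) (hkk' : k ≤ k')
    (𝒮 𝒮' : Finset (Finset V))
    (hS : IsNucleus G r s k 𝒮) (hS' : IsNucleus G r s k' 𝒮')
    (hne : (𝒮 ∩ 𝒮').Nonempty) : 𝒮' ⊆ 𝒮 := by
  obtain ⟨S₀, hS₀⟩ := hne
  rw [Finset.mem_inter] at hS₀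
  obtain ⟨hS₀1, hS₀2⟩ := hS₀
  have hclq : G.IsNClique s S₀ := hS.1.1 S₀ hS₀1
  obtain ⟨R₀, hR₀sub, hR₀card⟩ := Finset.exists_subset_card_eq (s := S₀) (n := r) (by rw [hclq.2]; exact hrs.le)
  have hR₀clq : G.IsNClique r R₀ := ⟨hclq.1.subset hR₀sub, hR₀card⟩
  have hR₀S : InKr G r 𝒮 R₀ := ⟨hR₀clq, S₀, hS₀1, hR₀sub⟩
  have hR₀S' : InKr G r 𝒮' R₀ := ⟨hR₀clq, S₀, hS₀2, hR₀sub⟩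
  set U := 𝒮 ∪ 𝒮' with hU
  have h1 : 𝒮 ⊆ U := Finset.subset_union_left
  have h2 : 𝒮' ⊆ U := Finset.subset_union_right
  -- connect any R in K_r(U) to R₀
  have key : ∀ R, InKr G r U R → SConnected G r U R R₀ := by
    intro R ⟨hRclq, S, hSU, hRS⟩
    rcases Finset.mem_union.mp hSU with hmem | hmem
    · exact sconnected_mono h1 (hS.1.2.2 R R₀ ⟨hRclq, S, hmem, hRS⟩ hR₀S)
    · exact sconnected_mono h2 (hS'.1.2.2 R R₀ ⟨hRclq, S, hmem, hRS⟩ hR₀S')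
  have hpre : NucleusPre G r s k U := by
    refine ⟨?_, ?_, ?_⟩
    · intro S hSU
      rcases Finset.mem_union.mp hSU with hmem | hmem
      · exact hS.1.1 S hmem
      · exact hS'.1.1 S hmem
    · intro R ⟨hRclq, S, hSU, hRS⟩
      rcases Finset.mem_union.mp hSU with hmem | hmem
      · exact le_trans (hS.1.2.1 R ⟨hRclq, S, hmem, hRS⟩) (sdeg_mono h1 R)
      · exact le_trans (le_trans hkk' (hS'.1.2.1 R ⟨hRclq, S, hmem, hRS⟩)) (sdeg_mono h2 R)
    · intro R R' hR hR'
      exact (key R hR).trans (haveI : Std.Symm (Step G r U) := ⟨fun _ _ h => step_symm h⟩; Std.Symm.symm _ _ (key R' hR'))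
  have := hS.2 U hpre h1
  exact this ▸ h2

/-- Nuclei with a common `s`-clique are nested, and the family of all
`(r,s)`-nuclei forms a laminar family. -/
theorem nuclei_laminar (G : SimpleGraph V) (r s k k' : ℕ)
    (hr : 0 < r) (hrs : r < s) (hk : 0 < k) (hkk' : k ≤ k')
    (𝒮 𝒮' : Finset (Finset V))
    (hS : IsNucleus G r s k 𝒮) (hS' : IsNucleus G r s k' 𝒮') :
    ((𝒮 ∩ 𝒮').Nonempty → 𝒮' ⊆ 𝒮) ∧
    (∀ k₁ k₂ : ℕ, 0 < k₁ → 0 < k₂ → ∀ 𝒯 𝒯' : Finset (Finset V),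
      IsNucleus G r s k₁ 𝒯 → IsNucleus G r s k₂ 𝒯' →
      𝒯 ∩ 𝒯' = ∅ ∨ 𝒯 ⊆ 𝒯' ∨ 𝒯' ⊆ 𝒯) := by
  constructor
  · exact fun hne => nuclei_nested G r s k k' hrs hkk' 𝒮 𝒮' hS hS' hne
  · intro k₁ k₂ hk₁ hk₂ 𝒯 𝒯' hT hT'
    by_cases hne : (𝒯 ∩ 𝒯').Nonempty
    · rcases le_total k₁ k₂ with h | h
      · exact Or.inr (Or.inr (nuclei_nested G r s k₁ k₂ hrs h 𝒯 𝒯' hT hT' hne))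
      · refine Or.inr (Or.inl (nuclei_nested G r s k₂ k₁ hrs h 𝒯' 𝒯 hT' hT ?_))
        rwa [Finset.inter_comm]
    · exact Or.inl (Finset.not_nonempty_iff_eq_empty.mp hne)
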